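/- The squared Fischer-Burmeister function (a,b) ↦ (a + b − √(a² + b²))² is continuously differentiable on all of ℝ², including at the origin (a,b) = (0,0). -/

import Mathlib

open Real Asymptotics

noncomputable def fbr (p : ℝ × ℝ) : ℝ := Real.sqrt (p.1 ^ 2 + p.2 ^ 2)
noncomputable def fbphi (p : ℝ × ℝ) : ℝ := p.1 + p.2 - fbr p
noncomputable def fbc1 (p : ℝ × ℝ) : ℝ :=
  if p = 0 then 0 else 2 * fbphi p * (1 - p.1 / fbr p)
noncomputable def fbc2 (p : ℝ × ℝ) : ℝ :=
  if p = 0 then 0 else 2 * fbphi p * (1 - p.2 / fbr p)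
noncomputable def fbF (p : ℝ × ℝ) : ℝ × ℝ →L[ℝ] ℝ :=
  fbc1 p • ContinuousLinearMap.fst ℝ ℝ ℝ + fbc2 p • ContinuousLinearMap.snd ℝ ℝ ℝ

lemma fbr_nonneg (p : ℝ × ℝ) : 0 ≤ fbr p := Real.sqrt_nonneg _

lemma sq_pos_of_ne (p : ℝ × ℝ) (hp : p ≠ 0) : 0 < p.1 ^ 2 + p.2 ^ 2 := by
  rcases eq_or_ne p.1 0 with h1 | h1
  · have h2 : p.2 ≠ 0 := by
      intro h2; exact hp (Prod.ext h1 h2)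
    nlinarith [sq_nonneg p.1, pow_two_pos_of_ne_zero h2]
  · nlinarith [sq_nonneg p.2, pow_two_pos_of_ne_zero h1]

lemma fbr_pos (p : ℝ × ℝ) (hp : p ≠ 0) : 0 < fbr p :=
  Real.sqrt_pos.mpr (sq_pos_of_ne p hp)

lemma abs_fst_le_fbr (p : ℝ × ℝ) : |p.1| ≤ fbr p := by
  rw [← Real.sqrt_sq_eq_abs]
  exact Real.sqrt_le_sqrt (by nlinarith [sq_nonneg p.2])

lemma abs_snd_le_fbr (p : ℝ × ℝ) : |p.2| ≤ fbr p := by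
  rw [← Real.sqrt_sq_eq_abs]
  exact Real.sqrt_le_sqrt (by nlinarith [sq_nonneg p.1])

lemma fbr_le (p : ℝ × ℝ) : fbr p ≤ 2 * ‖p‖ := by
  have h1 : |p.1| ≤ ‖p‖ := by
    simpa [Real.norm_eq_abs] using norm_fst_le p
  have h2 : |p.2| ≤ ‖p‖ := by
    simpa [Real.norm_eq_abs] using norm_snd_le p
  have : fbr p ≤ |p.1| + |p.2| := by
    rw [fbr, show |p.1| + |p.2| = Real.sqrt ((|p.1| + |p.2|) ^ 2) from
      (Real.sqrt_sq (by positivity)).symm]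
    exact Real.sqrt_le_sqrt (by nlinarith [abs_nonneg p.1, abs_nonneg p.2, sq_abs p.1, sq_abs p.2, abs_mul_abs_self p.1, abs_mul_abs_self p.2])
    
  linarith

lemma abs_fbphi_le (p : ℝ × ℝ) : |fbphi p| ≤ 4 * ‖p‖ := by
  have h1 : |p.1| ≤ ‖p‖ := by simpa [Real.norm_eq_abs] using norm_fst_le p
  have h2 : |p.2| ≤ ‖p‖ := by simpa [Real.norm_eq_abs] using norm_snd_le p
  have h3 := fbr_le p
  have h4 := fbr_nonneg p
  rw [fbphi]
  have := abs_sub (p.1 + p.2) (fbr p)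
  calc |p.1 + p.2 - fbr p| ≤ |p.1 + p.2| + |fbr p| := abs_sub _ _
    _ ≤ |p.1| + |p.2| + fbr p := by
        rw [abs_of_nonneg h4]; linarith [abs_add_le p.1 p.2]
    _ ≤ 4 * ‖p‖ := by linarith

lemma abs_div_fbr_le_one (p : ℝ × ℝ) : |p.1 / fbr p| ≤ 1 ∧ |p.2 / fbr p| ≤ 1 := by
  rcases eq_or_ne p 0 with rfl | hp
  · simp [fbr]
  · have h := fbr_pos p hp
    constructor
    · rw [abs_div, abs_of_nonneg h.le, div_le_one h]
      exact abs_fst_le_fbr p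
    · rw [abs_div, abs_of_nonneg h.le, div_le_one h]
      exact abs_snd_le_fbr p

lemma hasF (p : ℝ × ℝ) :
    HasFDerivAt (fun q : ℝ × ℝ => (fbphi q) ^ 2) (fbF p) p := by
  rcases eq_or_ne p 0 with rfl | hp
  · -- derivative at 0 is 0
    have hF0 : fbF 0 = 0 := by
      simp [fbF, fbc1, fbc2]
    rw [hF0, hasFDerivAt_iff_isLittleO_nhds_zero]
    rw [isLittleO_iff]
    intro ε hε
    filter_upwards [Metric.ball_mem_nhds (0 : ℝ × ℝ) (show (0:ℝ) < ε / 16 by positivity)]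
      with q hq
    simp only [Metric.mem_ball, dist_zero_right] at hq
    have h0 : fbphi 0 = 0 := by simp [fbphi, fbr]
    have heq : fbphi (0 + q) ^ 2 - fbphi 0 ^ 2 - (0 : ℝ × ℝ →L[ℝ] ℝ) q = fbphi q ^ 2 := by
      simp [h0]
    rw [heq, Real.norm_eq_abs, abs_pow]
    calc |fbphi q| ^ 2 ≤ (4 * ‖q‖) ^ 2 := by
          have := abs_nonneg (fbphi q); nlinarith [abs_fbphi_le q]
      _ = 16 * ‖q‖ * ‖q‖ := by ring
      _ ≤ ε * ‖q‖ := by nlinarith [norm_nonneg q]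
  · have hr := fbr_pos p hp
    have hsne : p.1 ^ 2 + p.2 ^ 2 ≠ 0 := (sq_pos_of_ne p hp).ne'
    have hsq : HasFDerivAt (fun q : ℝ × ℝ => q.1 ^ 2 + q.2 ^ 2)
        ((2 * p.1) • ContinuousLinearMap.fst ℝ ℝ ℝ +
         (2 * p.2) • ContinuousLinearMap.snd ℝ ℝ ℝ) p := by
      have h1 : HasFDerivAt (fun q : ℝ × ℝ => q.1 ^ 2)
          ((2 * p.1) • ContinuousLinearMap.fst ℝ ℝ ℝ) p := by
        have := (hasDerivAt_pow 2 p.1).comp_hasFDerivAt p (hasFDerivAt_fst : HasFDerivAt Prod.fst (ContinuousLinearMap.fst ℝ ℝ ℝ) p)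
        simpa [Function.comp_def] using this
      have h2 : HasFDerivAt (fun q : ℝ × ℝ => q.2 ^ 2)
          ((2 * p.2) • ContinuousLinearMap.snd ℝ ℝ ℝ) p := by
        have := (hasDerivAt_pow 2 p.2).comp_hasFDerivAt p (hasFDerivAt_snd : HasFDerivAt Prod.snd (ContinuousLinearMap.snd ℝ ℝ ℝ) p)
        simpa [Function.comp_def] using this
      exact h1.add h2
    have hsqrt : HasFDerivAt (fun q : ℝ × ℝ => fbr q)
        ((1 / (2 * fbr p)) • ((2 * p.1) • ContinuousLinearMap.fst ℝ ℝ ℝ +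
          (2 * p.2) • ContinuousLinearMap.snd ℝ ℝ ℝ)) p := by
      have hds : HasDerivAt Real.sqrt (1 / (2 * Real.sqrt (p.1 ^ 2 + p.2 ^ 2)))
          (p.1 ^ 2 + p.2 ^ 2) := Real.hasDerivAt_sqrt hsne
      exact hds.comp_hasFDerivAt p hsq
    have hphi : HasFDerivAt (fun q : ℝ × ℝ => fbphi q)
        ((ContinuousLinearMap.fst ℝ ℝ ℝ + ContinuousLinearMap.snd ℝ ℝ ℝ) -
          (1 / (2 * fbr p)) • ((2 * p.1) • ContinuousLinearMap.fst ℝ ℝ ℝ +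
            (2 * p.2) • ContinuousLinearMap.snd ℝ ℝ ℝ)) p := by
      exact ((hasFDerivAt_fst : HasFDerivAt Prod.fst (ContinuousLinearMap.fst ℝ ℝ ℝ) p).add (hasFDerivAt_snd : HasFDerivAt Prod.snd (ContinuousLinearMap.snd ℝ ℝ ℝ) p)).sub hsqrt
    have hg : HasFDerivAt (fun q : ℝ × ℝ => (fbphi q) ^ 2)
        ((2 * fbphi p ^ 1) • ((ContinuousLinearMap.fst ℝ ℝ ℝ + ContinuousLinearMap.snd ℝ ℝ ℝ) -
          (1 / (2 * fbr p)) • ((2 * p.1) • ContinuousLinearMap.fst ℝ ℝ ℝ +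
            (2 * p.2) • ContinuousLinearMap.snd ℝ ℝ ℝ))) p := by
      have := (hasDerivAt_pow 2 (fbphi p)).comp_hasFDerivAt p hphi
      simpa [Function.comp_def] using this
    have heq : fbF p = (2 * fbphi p ^ 1) •
        ((ContinuousLinearMap.fst ℝ ℝ ℝ + ContinuousLinearMap.snd ℝ ℝ ℝ) -
          (1 / (2 * fbr p)) • ((2 * p.1) • ContinuousLinearMap.fst ℝ ℝ ℝ +
            (2 * p.2) • ContinuousLinearMap.snd ℝ ℝ ℝ)) := by
      apply ContinuousLinearMap.ext
      intro v
      simp only [fbF, fbc1, fbc2, if_neg hp, ContinuousLinearMap.add_apply,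
        ContinuousLinearMap.smul_apply, ContinuousLinearMap.coe_fst',
        ContinuousLinearMap.coe_snd', ContinuousLinearMap.sub_apply, smul_eq_mul, pow_one]
      have hrne : fbr p ≠ 0 := hr.ne'
      field_simp
      ring
    rw [heq]
    exact hg

lemma fbF_cont : Continuous fbF := by
  have hc1 : Continuous fbc1 := by
    rw [continuous_iff_continuousAt]
    intro p
    rcases eq_or_ne p 0 with rfl | hp
    · have hb : ∀ q : ℝ × ℝ, ‖fbc1 q‖ ≤ 16 * ‖q‖ := by
        intro q
        rcases eq_or_ne q 0 with rfl | hq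
        · simp [fbc1]
        · rw [fbc1, if_neg hq]
          have h1 := abs_fbphi_le q
          have h2 := (abs_div_fbr_le_one q).1
          have h3 : |1 - q.1 / fbr q| ≤ 2 := by
            have := abs_sub (1 : ℝ) (q.1 / fbr q)
            calc |1 - q.1 / fbr q| ≤ |(1:ℝ)| + |q.1 / fbr q| := abs_sub _ _
              _ ≤ 2 := by rw [abs_one]; linarith
          rw [Real.norm_eq_abs, abs_mul, abs_mul, abs_two]
          have h4 := abs_nonneg (fbphi q)
          have h5 := abs_nonneg (1 - q.1 / fbr q)
          calc 2 * |fbphi q| * |1 - q.1 / fbr q|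
              ≤ 2 * (4 * ‖q‖) * 2 := by
                have hn := norm_nonneg q
                nlinarith
            _ = 16 * ‖q‖ := by ring
      have h0 : fbc1 0 = 0 := by simp [fbc1]
      rw [ContinuousAt, h0]
      apply squeeze_zero_norm hb
      have : Continuous fun q : ℝ × ℝ => 16 * ‖q‖ := by continuity
      simpa using this.tendsto 0
    · have hev : (fun q : ℝ × ℝ => 2 * fbphi q * (1 - q.1 / fbr q)) =ᶠ[nhds p] fbc1 := by
        filter_upwards [isOpen_ne.mem_nhds hp] with q hq
        rw [fbc1, if_neg hq]
      have hrc : Continuous fbr := by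
        apply Real.continuous_sqrt.comp
        continuity
      have hrp : fbr p ≠ 0 := (fbr_pos p hp).ne'
      have hphic : Continuous fbphi := by
        apply Continuous.sub
        · continuity
        · exact hrc
      have hca : ContinuousAt (fun q : ℝ × ℝ => 2 * fbphi q * (1 - q.1 / fbr q)) p := by
        apply ContinuousAt.mul
        · exact (continuous_const.mul hphic).continuousAt
        · exact continuousAt_const.sub
            (ContinuousAt.div continuous_fst.continuousAt hrc.continuousAt hrp)
      exact hca.congr hev
  have hc2 : Continuous fbc2 := by
    rw [continuous_iff_continuousAt]
    intro p
    rcases eq_or_ne p 0 with rfl | hp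
    · have hb : ∀ q : ℝ × ℝ, ‖fbc2 q‖ ≤ 16 * ‖q‖ := by
        intro q
        rcases eq_or_ne q 0 with rfl | hq
        · simp [fbc2]
        · rw [fbc2, if_neg hq]
          have h1 := abs_fbphi_le q
          have h2 := (abs_div_fbr_le_one q).2
          have h3 : |1 - q.2 / fbr q| ≤ 2 := by
            calc |1 - q.2 / fbr q| ≤ |(1:ℝ)| + |q.2 / fbr q| := abs_sub _ _
              _ ≤ 2 := by rw [abs_one]; linarith
          rw [Real.norm_eq_abs, abs_mul, abs_mul, abs_two]
          have h4 := abs_nonneg (fbphi q)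
          have h5 := abs_nonneg (1 - q.2 / fbr q)
          calc 2 * |fbphi q| * |1 - q.2 / fbr q|
              ≤ 2 * (4 * ‖q‖) * 2 := by
                have hn := norm_nonneg q
                nlinarith
            _ = 16 * ‖q‖ := by ring
      have h0 : fbc2 0 = 0 := by simp [fbc2]
      rw [ContinuousAt, h0]
      apply squeeze_zero_norm hb
      have : Continuous fun q : ℝ × ℝ => 16 * ‖q‖ := by continuity
      simpa using this.tendsto 0
    · have hev : (fun q : ℝ × ℝ => 2 * fbphi q * (1 - q.2 / fbr q)) =ᶠ[nhds p] fbc2 := by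
        filter_upwards [isOpen_ne.mem_nhds hp] with q hq
        rw [fbc2, if_neg hq]
      have hrc : Continuous fbr := by
        apply Real.continuous_sqrt.comp
        continuity
      have hrp : fbr p ≠ 0 := (fbr_pos p hp).ne'
      have hphic : Continuous fbphi := by
        apply Continuous.sub
        · continuity
        · exact hrc
      have hca : ContinuousAt (fun q : ℝ × ℝ => 2 * fbphi q * (1 - q.2 / fbr q)) p := by
        apply ContinuousAt.mul
        · exact (continuous_const.mul hphic).continuousAt
        · exact continuousAt_const.sub
            (ContinuousAt.div continuous_snd.continuousAt hrc.continuousAt hrp)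
      exact hca.congr hev
  exact (hc1.smul continuous_const).add (hc2.smul continuous_const)

theorem fb_sq_contDiff :
    ContDiff ℝ 1 (fun p : ℝ × ℝ =>
      (p.1 + p.2 - Real.sqrt (p.1 ^ 2 + p.2 ^ 2)) ^ 2) := by
  have hfun : (fun p : ℝ × ℝ => (p.1 + p.2 - Real.sqrt (p.1 ^ 2 + p.2 ^ 2)) ^ 2) =
      fun q => (fbphi q) ^ 2 := rfl
  rw [hfun, contDiff_one_iff_fderiv]
  refine ⟨fun p => (hasF p).differentiableAt, ?_⟩
  have : (fderiv ℝ fun q : ℝ × ℝ => fbphi q ^ 2) = fbF := by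
    funext p
    exact (hasF p).fderiv
  rw [this]
  exact fbF_cont
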